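/- Let R be a commutative ring, M an R-module, N a semimodule over fgId(R), and let w : M → N be a u_R-seminorm with induced additive monoid homomorphism ŵ : fgMod(M) → N determined by ŵ(R·m) = w(m). Then ŵ is a morphism of fgId(R)-semimodules (that is, ŵ(ρ·μ) = ρ·ŵ(μ) for all ρ ∈ fgId(R) and μ ∈ fgMod(M)) if and only if w(r·m) = u_R(r)·w(m) for all r ∈ R and m ∈ M. -/

import Mathlib

def FGIdeal (R : Type*) [CommRing R] : Type _ := {I : Ideal R // I.FG}

namespace FGIdeal

variable {R : Type*} [CommRing R]

instance : Zero (FGIdeal R) := ⟨⟨⊥, Submodule.fg_bot⟩⟩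

instance : One (FGIdeal R) := ⟨⟨1, ⟨{1}, by simp [Ideal.one_eq_top]⟩⟩⟩

instance : Add (FGIdeal R) :=
  ⟨fun I J => ⟨I.1 + J.1, by rw [Submodule.add_eq_sup]; exact Submodule.FG.sup I.2 J.2⟩⟩

instance : Mul (FGIdeal R) := ⟨fun I J => ⟨I.1 * J.1, Submodule.FG.mul I.2 J.2⟩⟩

instance : SMul ℕ (FGIdeal R) :=
  ⟨fun n I => ⟨n • I.1, by
    induction n with
    | zero => simp only [zero_smul, Nat.cast_zero]; exact Submodule.fg_bot
    | succ n ih => rw [succ_nsmul, Submodule.add_eq_sup]; exact Submodule.FG.sup ih I.2⟩⟩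

instance : Pow (FGIdeal R) ℕ := ⟨fun I n => ⟨I.1 ^ n, Submodule.FG.pow I.2 n⟩⟩

instance : NatCast (FGIdeal R) :=
  ⟨fun n => ⟨(n : Ideal R), by
    induction n with
    | zero => simp only [zero_smul, Nat.cast_zero]; exact Submodule.fg_bot
    | succ n ih =>
        rw [Nat.cast_succ, Submodule.add_eq_sup]
        exact Submodule.FG.sup ih ⟨{1}, by simp [Ideal.one_eq_top]⟩⟩⟩

instance : CommSemiring (FGIdeal R) :=
  Subtype.val_injective.commSemiring (fun I : FGIdeal R => I.1) rfl rfl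
    (fun _ _ => rfl) (fun _ _ => rfl) (fun _ _ => rfl) (fun _ _ => rfl) (fun _ => rfl)

end FGIdeal

/-- The universal integral seminorm `u_R : R → fgId(R)`, `a ↦ R·a`. -/
def uRfg {R : Type*} [CommRing R] (a : R) : FGIdeal R := ⟨Ideal.span {a}, Submodule.fg_span_singleton a⟩

/-- The type of finitely generated `R`-submodules of `M`. -/
def FGSubmodule (R M : Type*) [CommRing R] [AddCommGroup M] [Module R M] : Type _ :=
  {N : Submodule R M // N.FG}

namespace FGSubmodule

variable {R M : Type*} [CommRing R] [AddCommGroup M] [Module R M]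

instance : Zero (FGSubmodule R M) := ⟨⟨⊥, Submodule.fg_bot⟩⟩

instance : Add (FGSubmodule R M) := ⟨fun A B => ⟨A.1 ⊔ B.1, Submodule.FG.sup A.2 B.2⟩⟩

instance : AddCommMonoid (FGSubmodule R M) where
  add_assoc A B C := Subtype.ext (sup_assoc _ _ _)
  zero_add A := Subtype.ext (bot_sup_eq _)
  add_zero A := Subtype.ext (sup_bot_eq _)
  add_comm A B := Subtype.ext (sup_comm _ _)
  nsmul := nsmulRec

/-- The action of `fgId(R)` on `fgMod(M)`, `(I, N) ↦ I • N`. -/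
instance : SMul (FGIdeal R) (FGSubmodule R M) :=
  ⟨fun ρ ν => ⟨ρ.1 • ν.1, by
    rw [Submodule.smul_eq_map₂]; exact Submodule.FG.map₂ _ ρ.2 ν.2⟩⟩

end FGSubmodule

/-- The universal `u_R`-norm `u_M : M → fgMod(M)`, `m ↦ R·m`. -/
def uMfg {R M : Type*} [CommRing R] [AddCommGroup M] [Module R M] (m : M) : FGSubmodule R M :=
  ⟨Submodule.span R {m}, Submodule.fg_span_singleton m⟩

/-- A `u_R`-seminorm on an `R`-module `M` with values in an `fgId(R)`-semimodule `N`: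
`w 0 = 0`, `w (m + m') ≤ w m + w m'`, and `w (r • m) ≤ C u_R(r) • w m` for some fixed
nonzero `C ∈ fgId(R)`. Inequalities are expressed through the canonical order
`x ≤ y` iff `x + y = y`. -/
def IsURSeminorm {R M N : Type*} [CommRing R] [AddCommGroup M] [Module R M]
    [AddCommMonoid N] [Module (FGIdeal R) N] (w : M → N) : Prop :=
  w 0 = 0 ∧
    (∀ m m' : M, w (m + m') + (w m + w m') = w m + w m') ∧
    ∃ C : FGIdeal R, C ≠ 0 ∧
      ∀ (r : R) (m : M), w (r • m) + (C * uRfg r) • w m = (C * uRfg r) • w m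

section Aux

variable {R M N : Type*} [CommRing R] [AddCommGroup M] [Module R M]

lemma FGSubmodule.smul_val (ρ : FGIdeal R) (μ : FGSubmodule R M) :
    (ρ • μ).1 = ρ.1 • μ.1 := rfl

lemma uRfg_smul_uMfg (r : R) (m : M) :
    uRfg r • uMfg m = uMfg (R := R) (r • m) := by
  apply Subtype.ext
  show Ideal.span {r} • Submodule.span R {m} = Submodule.span R {r • m}
  rw [Submodule.span_smul_span]
  simp

lemma FGSubmodule.smul_add' (ρ : FGIdeal R) (μ ν : FGSubmodule R M) :
    ρ • (μ + ν) = ρ • μ + ρ • ν :=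
  Subtype.ext (Submodule.smul_sup ..)

lemma FGSubmodule.add_smul' (ρ σ : FGIdeal R) (μ : FGSubmodule R M) :
    (ρ + σ) • μ = ρ • μ + σ • μ :=
  Subtype.ext (Submodule.sup_smul ..)

lemma FGSubmodule.zero_smul' (μ : FGSubmodule R M) :
    (0 : FGIdeal R) • μ = 0 :=
  Subtype.ext (Submodule.bot_smul _)

lemma FGSubmodule.smul_zero' (ρ : FGIdeal R) :
    ρ • (0 : FGSubmodule R M) = 0 :=
  Subtype.ext (Submodule.smul_bot _)

end Aux

/-- The induced additive monoid homomorphism `ŵ : fgMod(M) → N` of a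
`u_R`-seminorm `w` (determined by `ŵ (R·m) = w m`) is a morphism of
`fgId(R)`-semimodules, i.e. `ŵ (ρ • μ) = ρ • ŵ μ` for all `ρ`, `μ`, if and only if
`w (r • m) = u_R(r) • w m` for all `r ∈ R` and `m ∈ M`. -/
theorem induced_hom_is_semimodule_hom_iff
    (R M N : Type*) [CommRing R] [AddCommGroup M] [Module R M]
    [AddCommMonoid N] [Module (FGIdeal R) N]
    (w : M → N) (hw : IsURSeminorm (R := R) w)
    (what : FGSubmodule R M →+ N) (hfac : ∀ m : M, what (uMfg m) = w m) :
    (∀ (ρ : FGIdeal R) (μ : FGSubmodule R M), what (ρ • μ) = ρ • what μ) ↔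
      (∀ (r : R) (m : M), w (r • m) = uRfg r • w m) := by
  constructor
  · intro H r m
    rw [← hfac, ← uRfg_smul_uMfg, H, hfac]
  · intro h
    classical
    -- First: the claim for singleton submodules, by induction on generators of ρ
    have key1 : ∀ (s : Finset R) (ρ : FGIdeal R), ρ.1 = Ideal.span s →
        ∀ m : M, what (ρ • uMfg m) = ρ • w m := by
      intro s
      induction s using Finset.induction_on with
      | empty =>
          intro ρ hρ m
          have : ρ = 0 := Subtype.ext (by simp at hρ; exact hρ)
          rw [this, FGSubmodule.zero_smul', map_zero, zero_smul]
      | @insert a s ha ih =>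
          intro ρ hρ m
          set σ : FGIdeal R := ⟨Ideal.span s, ⟨s, rfl⟩⟩ with hσ
          have hρ' : ρ = uRfg a + σ := by
            apply Subtype.ext
            rw [hρ]
            show Ideal.span ↑(insert a s) = Ideal.span {a} + Ideal.span ↑s
            rw [Finset.coe_insert, Ideal.span_insert, Submodule.add_eq_sup]
          rw [hρ', FGSubmodule.add_smul', map_add, uRfg_smul_uMfg, hfac,
            ih σ rfl m, h, ← add_smul]
    have key1' : ∀ (ρ : FGIdeal R) (m : M), what (ρ • uMfg m) = ρ • w m := by
      intro ρ m
      obtain ⟨s, hs⟩ := ρ.2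
      exact key1 s ρ hs.symm m
    -- Now the general claim, by induction on generators of μ
    intro ρ μ
    obtain ⟨t, ht⟩ := μ.2
    have : μ.1 = Submodule.span R t := ht.symm
    clear ht
    induction t using Finset.induction_on generalizing μ with
    | empty =>
        have : μ = 0 := Subtype.ext (by simp at this; exact this)
        rw [this, FGSubmodule.smul_zero', map_zero, smul_zero]
    | @insert m t hm ih =>
        set ν : FGSubmodule R M := ⟨Submodule.span R t, ⟨t, rfl⟩⟩ with hν
        have hμ' : μ = uMfg m + ν := by
          apply Subtype.ext
          rw [this]
          show Submodule.span R ↑(insert m t) = Submodule.span R {m} ⊔ Submodule.span R ↑t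
          rw [Finset.coe_insert, Submodule.span_insert]
        rw [hμ', FGSubmodule.smul_add', map_add, map_add, hfac, key1',
          ih ν rfl, smul_add]
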